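/- Let $R$ be a commutative ring of prime characteristic $p$, and suppose that for all $e \in \mathbb{N}$ the natural inclusion $R \hookrightarrow \mathrm{End}_R(F^e_* R)$ is an isomorphism, where $F^e_* R$ is $R$ viewed as a module over itself via the $e$-th Frobenius $r \mapsto r^{p^e}$. If $R$ is a domain of positive dimension, then $F^e_* R$ is an indecomposable $R$-module for every $e$. -/
import Mathlib


/-- let `R` be a domain of characteristic `p` and positive dimension such
that for every `e` each `R`-linear endomorphism of `F^e_* R` (i.e. each additive map
`φ : R → R` with `φ(r^{p^e} x) = r^{p^e} φ(x)`) is multiplication by an element of `R`.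
Then `F^e_* R` is indecomposable for every `e`: there is no decomposition of `R` into two
nonzero additive subgroups stable under the `F^e_* R`-module structure. -/
theorem stmt18 {R : Type*} [CommRing R] [IsDomain R] (p : ℕ) [Fact p.Prime] [CharP R p]
    (hdim : 0 < ringKrullDim R)
    (hend : ∀ e : ℕ, ∀ φ : R → R,
      (∀ x y, φ (x + y) = φ x + φ y) →
      (∀ r x : R, φ (r ^ p ^ e * x) = r ^ p ^ e * φ x) →
      ∃ v : R, ∀ x, φ x = v * x) :
    ∀ e : ℕ, ¬∃ M N : AddSubgroup R,
      (∀ r : R, ∀ x ∈ M, r ^ p ^ e * x ∈ M) ∧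
      (∀ r : R, ∀ x ∈ N, r ^ p ^ e * x ∈ N) ∧
      M ≠ ⊥ ∧ N ≠ ⊥ ∧ M ⊓ N = ⊥ ∧ M ⊔ N = ⊤ := by
  rintro e ⟨M, N, hM, hN, hM0, hN0, hMN, hsup⟩
  have hex : ∀ x : R, ∃ m, m ∈ M ∧ ∃ n, n ∈ N ∧ m + n = x := by
    intro x
    have hx : x ∈ M ⊔ N := hsup ▸ AddSubgroup.mem_top x
    rcases AddSubgroup.mem_sup.mp hx with ⟨m, hm, n, hn, h⟩
    exact ⟨m, hm, n, hn, h⟩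
  choose f hfM g hgN hfg using hex
  have huniq : ∀ m n m' n', m ∈ M → n ∈ N → m' ∈ M → n' ∈ N →
      m + n = m' + n' → m = m' := by
    intro m n m' n' hm hn hm' hn' h
    have hmem : m - m' ∈ M ⊓ N := by
      refine AddSubgroup.mem_inf.mpr ⟨sub_mem hm hm', ?_⟩
      have : m - m' = n' - n := by linear_combination h
      rw [this]; exact sub_mem hn' hn
    rw [hMN] at hmem
    exact sub_eq_zero.mp (AddSubgroup.mem_bot.mp hmem)
  have hadd : ∀ x y, f (x + y) = f x + f y := by
    intro x y
    refine (huniq _ (g (x + y)) _ (g x + g y) (hfM _) (hgN _)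
      (add_mem (hfM x) (hfM y)) (add_mem (hgN x) (hgN y)) ?_)
    rw [hfg (x + y)]
    linear_combination - hfg x - hfg y
  have hsmul : ∀ r x : R, f (r ^ p ^ e * x) = r ^ p ^ e * f x := by
    intro r x
    refine (huniq _ (g (r ^ p ^ e * x)) _ (r ^ p ^ e * g x) (hfM _) (hgN _)
      (hM r _ (hfM x)) (hN r _ (hgN x)) ?_)
    rw [hfg (r ^ p ^ e * x)]
    linear_combination (-(r ^ p ^ e : R)) * hfg x
  obtain ⟨v, hv⟩ := hend e f hadd hsmul
  obtain ⟨m, hm, hm0⟩ : ∃ m ∈ M, m ≠ 0 := by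
    by_contra h
    push_neg at h
    exact hM0 ((AddSubgroup.eq_bot_iff_forall M).mpr h)
  obtain ⟨n, hn, hn0⟩ : ∃ n ∈ N, n ≠ 0 := by
    by_contra h
    push_neg at h
    exact hN0 ((AddSubgroup.eq_bot_iff_forall N).mpr h)
  have hfm : f m = m :=
    huniq _ (g m) m 0 (hfM m) (hgN m) hm (zero_mem N) (by rw [hfg m, add_zero])
  have hfn : f n = 0 :=
    huniq _ (g n) 0 n (hfM n) (hgN n) (zero_mem M) hn (by rw [hfg n, zero_add])
  have hv1 : v = 1 := by
    have : (v - 1) * m = 0 := by linear_combination (hv m).symm.trans hfm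
    rcases mul_eq_zero.mp this with h | h
    · exact sub_eq_zero.mp h
    · exact absurd h hm0
  have hv0 : v = 0 := by
    have : v * n = 0 := (hv n).symm.trans hfn
    rcases mul_eq_zero.mp this with h | h
    · exact h
    · exact absurd h hn0
  exact one_ne_zero (hv1 ▸ hv0 ▸ rfl : (1 : R) = 0)
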